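/- There exists a simple graph G on 8 vertices such that G is not isomorphic to its complement Ḡ but G and Ḡ are cospectral (their adjacency matrices have the same characteristic polynomial); in particular, G and Ḡ form a pair of complementary equienergetic graphs of order 8. -/

import Mathlib

open Polynomial

/-- Adjacency matrix over ℝ, using classical instances. -/
noncomputable def adjMat {V : Type*} [Finite V] (G : SimpleGraph V) : Matrix V V ℝ :=
  letI := Fintype.ofFinite V
  letI := Classical.decEq V
  letI := Classical.decRel G.Adj
  G.adjMatrix ℝ

/-- The energy of a graph: the sum of the absolute values of the eigenvalues of its
adjacency matrix (equivalently, of the roots of its characteristic polynomial, with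
multiplicity, which all are real since the matrix is real symmetric). -/
noncomputable def energy {V : Type*} [Finite V] (G : SimpleGraph V) : ℝ :=
  letI := Fintype.ofFinite V
  letI := Classical.decEq V
  (((adjMat G).charpoly).roots.map (fun x => |x|)).sum

/- ### Auxiliary material -/

/-- Boolean adjacency table of our graph. -/
def adjB : Matrix (Fin 8) (Fin 8) Bool :=
  !![false, false, true, false, false, false, false, false;
    false, false, false, false, false, true, false, true;
    true, false, false, false, false, true, false, true;
    false, false, false, false, false, true, true, true;
    false, false, false, false, false, true, true, true;
    false, true, true, true, true, false, true, true;
    false, false, false, true, true, true, false, true;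
    false, true, true, true, true, true, true, false]

/-- The graph itself. -/
def G8 : SimpleGraph (Fin 8) where
  Adj i j := adjB i j = true
  symm := ⟨by intro a b; fin_cases a <;> fin_cases b <;> decide⟩
  loopless := ⟨by intro a; revert a; decide⟩

instance : DecidableRel G8.Adj := fun _ _ => instDecidableEqBool _ _

/-- Real adjacency matrix of `G8`. -/
noncomputable def Amat : Matrix (Fin 8) (Fin 8) ℝ :=
  Matrix.of fun i j => if adjB i j then (1 : ℝ) else 0

/-- Real adjacency matrix of the complement of `G8`. -/
noncomputable def Bmat : Matrix (Fin 8) (Fin 8) ℝ :=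
  Matrix.of fun i j => if i ≠ j ∧ ¬ (adjB i j = true) then (1 : ℝ) else 0

noncomputable def Mmat : Matrix (Fin 8) (Fin 8) ℝ :=
  !![0, 0, 2, 1, 1, 1, -1, 1;
    -2, 0, 2, -1, -1, 1, 3, 1;
    2, 2, -2, 1, 1, 0, 2, 0;
    0, 0, 0, 1, 1, -1, 0, 3;
    0, 0, 0, 1, 1, 3, 0, -1;
    2, 1, 0, -1, 0, 0, 1, 0;
    0, 0, 0, 1, 1, 1, -1, 1;
    2, 1, 0, 0, -1, 0, 1, 0]

noncomputable def Nmat : Matrix (Fin 8) (Fin 8) ℝ :=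
  !![0, -1/4, -1/4, 1/2, 1/2, 1/4, -3/4, 1/4;
    1/4, 3/8, 5/8, -5/4, -5/4, -1/8, 15/8, -1/8;
    1/2, 0, 0, 0, 0, 0, -1/2, 0;
    1/4, -1/8, 1/8, 1/4, 1/4, -5/8, -5/8, 3/8;
    1/4, -1/8, 1/8, 1/4, 1/4, 3/8, -5/8, -5/8;
    -1/4, 1/8, -1/8, -1/8, 1/8, 1/8, 5/8, 1/8;
    0, 0, 0, 1/2, 1/2, 0, -1, 0;
    -1/4, 1/8, -1/8, 1/8, -1/8, 1/8, 5/8, 1/8]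

set_option maxHeartbeats 4000000 in
lemma MN_eq_one : Mmat * Nmat = 1 := by
  ext i j
  fin_cases i <;> fin_cases j <;>
  · rw [Matrix.mul_apply]
    norm_num [Fin.sum_univ_succ, Mmat, Nmat, Matrix.one_apply, Matrix.cons_val_succ] <;>
      first
        | exact (if_neg (by decide)).symm
        | exact (if_pos (by decide)).symm

set_option maxHeartbeats 4000000 in
lemma NM_eq_one : Nmat * Mmat = 1 := by
  ext i j
  fin_cases i <;> fin_cases j <;>
  · rw [Matrix.mul_apply]
    norm_num [Fin.sum_univ_succ, Mmat, Nmat, Matrix.one_apply, Matrix.cons_val_succ] <;>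
      first
        | exact (if_neg (by decide)).symm
        | exact (if_pos (by decide)).symm

set_option maxHeartbeats 4000000 in
lemma intertwine : Mmat * Amat = Bmat * Mmat := by
  ext i j
  fin_cases i <;> fin_cases j <;>
  · rw [Matrix.mul_apply, Matrix.mul_apply]
    simp only [Fin.sum_univ_succ, Mmat, Amat, Bmat, adjB, Matrix.of_apply, Matrix.cons_val_zero, Matrix.cons_val_succ, Matrix.cons_val_zero', Matrix.cons_val_succ']
    norm_num [Fin.ext_iff]

lemma charpoly_conj_aux {n : Type*} [DecidableEq n] [Fintype n]
    (A M N : Matrix n n ℝ) (h1 : M * N = 1) (h2 : N * M = 1) :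
    (M * A * N).charpoly = A.charpoly := by
  unfold Matrix.charpoly
  let f : Matrix n n ℝ →+* Matrix n n ℝ[X] := (C : ℝ →+* ℝ[X]).mapMatrix
  have hmap : ∀ P Q : Matrix n n ℝ, f (P * Q) = f P * f Q := fun P Q => map_mul f P Q
  have key : Matrix.charmatrix (M * A * N) = f M * Matrix.charmatrix A * f N := by
    rw [Matrix.charmatrix, Matrix.charmatrix]
    rw [mul_sub, sub_mul]
    congr 1
    · have hc : f M * Matrix.scalar n (X : ℝ[X]) = Matrix.scalar n (X : ℝ[X]) * f M := by
        exact (Matrix.scalar_commute (X : ℝ[X]) (fun r => (Commute.all _ _)) (f M)).symm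
      refine (?_ : f M * Matrix.scalar n (X : ℝ[X]) * f N = Matrix.scalar n (X : ℝ[X])).symm
      calc f M * Matrix.scalar n (X : ℝ[X]) * f N
          = Matrix.scalar n (X : ℝ[X]) * (f M * f N) := by rw [hc, mul_assoc]
        _ = Matrix.scalar n (X : ℝ[X]) := by rw [← hmap, h1]; simp
    · rw [← hmap, ← hmap]
  rw [key, Matrix.det_mul, Matrix.det_mul]
  have hone : f M * f N = 1 := by rw [← hmap, h1]; simp
  have hdet : (f M).det * (f N).det = 1 := by
    rw [← Matrix.det_mul, hone, Matrix.det_one]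
  calc (f M).det * (Matrix.charmatrix A).det * (f N).det
      = (Matrix.charmatrix A).det * ((f M).det * (f N).det) := by ring
    _ = (Matrix.charmatrix A).det := by rw [hdet, mul_one]

lemma ite_congr_prop {α : Sort*} {p q : Prop} (hpq : p = q) (h1 : Decidable p)
    (h2 : Decidable q) (a b : α) : @ite _ p h1 a b = @ite _ q h2 a b := by
  subst hpq; congr 1

lemma adjMat_G8 : adjMat G8 = Amat := by
  ext i j
  unfold adjMat Amat SimpleGraph.adjMatrix
  rw [Matrix.of_apply, Matrix.of_apply]
  exact ite_congr_prop rfl _ _ _ _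

lemma adjMat_G8_compl : adjMat G8ᶜ = Bmat := by
  ext i j
  unfold adjMat Bmat SimpleGraph.adjMatrix
  rw [Matrix.of_apply, Matrix.of_apply]
  exact ite_congr_prop rfl _ _ _ _

lemma cospectral : (adjMat G8).charpoly = (adjMat G8ᶜ).charpoly := by
  rw [adjMat_G8, adjMat_G8_compl]
  have hB : Bmat = Mmat * Amat * Nmat := by
    calc Bmat = Bmat * (Mmat * Nmat) := by rw [MN_eq_one, mul_one]
      _ = (Bmat * Mmat) * Nmat := by rw [mul_assoc]
      _ = (Mmat * Amat) * Nmat := by rw [intertwine]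
  rw [hB, charpoly_conj_aux Amat Mmat Nmat MN_eq_one NM_eq_one]

lemma deg_one : G8.degree 1 = 2 := by decide

lemma compl_deg_ne : ∀ w : Fin 8, G8ᶜ.degree w ≠ 2 := by decide

lemma not_iso : ¬ Nonempty (G8 ≃g G8ᶜ) := by
  rintro ⟨φ⟩
  have h : G8ᶜ.degree (φ 1) = G8.degree 1 := by
    rw [← SimpleGraph.card_neighborSet_eq_degree, ← SimpleGraph.card_neighborSet_eq_degree]
    exact (Fintype.card_congr (φ.mapNeighborSet 1)).symm
  exact compl_deg_ne (φ 1) (h.trans deg_one)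

/-- Charpoly equality with arbitrary instances. -/
lemma cospectral' (i1 : Fintype (Fin 8)) (i2 : DecidableEq (Fin 8)) :
    @Matrix.charpoly ℝ _ (Fin 8) i2 i1 (adjMat G8)
      = @Matrix.charpoly ℝ _ (Fin 8) i2 i1 (adjMat G8ᶜ) := by
  have e1 : i1 = Fin.fintype 8 := Subsingleton.elim _ _
  have e2 : i2 = instDecidableEqFin 8 := Subsingleton.elim _ _
  subst e1; subst e2
  exact cospectral

/-- There is a graph `G` on 8 vertices that is not isomorphic to its complement but is
cospectral with its complement; in particular `G` and `Gᶜ` are a pair of complementary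
equienergetic graphs of order 8. -/
theorem exists_noniso_cospectral_compl_order_eight :
    ∃ G : SimpleGraph (Fin 8),
      ¬ Nonempty (G ≃g Gᶜ) ∧
      (adjMat G).charpoly = (adjMat Gᶜ).charpoly ∧
      energy G = energy Gᶜ := by
  refine ⟨G8, not_iso, cospectral' _ _, ?_⟩
  unfold energy
  rw [cospectral' _ _]
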